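/- Generalized symmetric extensions of maximally symmetric operators are of kind II. Let A be a densely defined closed symmetric operator on a complex Hilbert space H which is maximally symmetric. Let K be a complex Hilbert space, J : H → K a linear isometry, and B a densely defined symmetric operator on K such that Jx belongs to the domain of B and B(Jx) = J(Ax) for every x in the domain of A, and assume that every closed subspace of K orthogonal to the range of J that reduces B is the zero subspace. Then the domain of A equals {x ∈ H : Jx belongs to the domain of B}. -/

import Mathlib

/-- The orthogonal projection of `K` onto a closed subspace `K₀`, as an operator `K →L[ℂ] K`. -/
noncomputable def projOf {K : Type*} [NormedAddCommGroup K] [InnerProductSpace ℂ K]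
    [CompleteSpace K] (K₀ : Submodule ℂ K) (hc : IsClosed (K₀ : Set K)) : K →L[ℂ] K :=
  haveI : CompleteSpace K₀ := hc.completeSpace_coe
  K₀.subtypeL.comp (K₀.orthogonalProjectionOnto)

/-- A closed subspace `K₀` (with projector `P₀`) reduces the operator `B` if `P₀` maps the
domain of `B` into itself and `B P₀ x = P₀ B x` for all `x` in the domain of `B`. -/
def ReducesPMap {K : Type*} [NormedAddCommGroup K] [InnerProductSpace ℂ K] [CompleteSpace K]
    (B : K →ₗ.[ℂ] K) (K₀ : Submodule ℂ K) (hc : IsClosed (K₀ : Set K)) : Prop :=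
  (∀ x : B.domain, projOf K₀ hc (x : K) ∈ B.domain) ∧
  ∀ (x : B.domain) (h : projOf K₀ hc (x : K) ∈ B.domain),
    B ⟨projOf K₀ hc (x : K), h⟩ = projOf K₀ hc (B x)

/-- A (partially defined) operator is symmetric if `⟪Bx, y⟫ = ⟪x, By⟫` on its domain. -/
def IsSymmetricPMap {K : Type*} [NormedAddCommGroup K] [InnerProductSpace ℂ K]
    (B : K →ₗ.[ℂ] K) : Prop :=
  ∀ x y : B.domain, (inner ℂ (B x) ((y : K)) : ℂ) = inner ℂ ((x : K)) (B y)

/-- A densely defined symmetric operator is maximally symmetric if it is closed and admits no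
proper densely defined symmetric extension on the same Hilbert space. -/
def MaxSymmetric {H : Type*} [NormedAddCommGroup H] [InnerProductSpace ℂ H]
    (T : H →ₗ.[ℂ] H) : Prop :=
  Dense (T.domain : Set H) ∧ IsSymmetricPMap T ∧ T.IsClosed ∧
  ∀ S : H →ₗ.[ℂ] H, Dense (S.domain : Set H) → IsSymmetricPMap S → T ≤ S → S = T

/-- **Generalized symmetric extensions of maximally symmetric operators are of kind II.**
If `A` is maximally symmetric on `H` and `B` is a generalized symmetric extension of `A`
through a linear isometry `J : H → K` such that no nonzero closed subspace of `K` orthogonal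
to the range of `J` reduces `B`, then the domain of `A` is exactly the set of `x ∈ H` with
`J x` in the domain of `B`. -/
theorem maxSymmetric_generalized_extension_kind_II
    {H K : Type*} [NormedAddCommGroup H] [InnerProductSpace ℂ H] [CompleteSpace H]
    [NormedAddCommGroup K] [InnerProductSpace ℂ K] [CompleteSpace K]
    (A : H →ₗ.[ℂ] H) (hA : MaxSymmetric A)
    (J : H →ₗᵢ[ℂ] K) (B : K →ₗ.[ℂ] K)
    (hBsymm : IsSymmetricPMap B) (hBdense : Dense (B.domain : Set K))
    (hmem : ∀ x : A.domain, J (x : H) ∈ B.domain)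
    (hext : ∀ (x : A.domain) (h : J (x : H) ∈ B.domain), B ⟨J (x : H), h⟩ = J (A x))
    (hred : ∀ (K₀ : Submodule ℂ K) (hc : IsClosed (K₀ : Set K)),
      K₀ ≤ (LinearMap.range J.toLinearMap)ᗮ → ReducesPMap B K₀ hc → K₀ = ⊥) :
    (A.domain : Set H) = {x : H | J x ∈ B.domain} := by
  classical
  -- the range of `J` is a closed, hence complete, subspace of `K`
  set R : Submodule ℂ K := LinearMap.range J.toLinearMap with hRdef
  have hRclosed : IsClosed (R : Set K) := by
    have hs : (R : Set K) = Set.range J := by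
      ext k
      simp only [hRdef, SetLike.mem_coe, LinearMap.mem_range, Set.mem_range]
      rfl
    rw [hs]
    exact J.isometry.isClosedEmbedding.isClosed_range
  haveI : CompleteSpace R := hRclosed.completeSpace_coe
  haveI : R.HasOrthogonalProjection := Submodule.HasOrthogonalProjection.ofCompleteSpace R
  set P := R.orthogonalProjection with hPdef
  set e : H ≃ₗ[ℂ] R := LinearEquiv.ofInjective J.toLinearMap J.injective with hedef
  have hJe : ∀ w : R, J (e.symm w) = (w : K) := by
    intro w
    conv_rhs => rw [← e.apply_symm_apply w]
    rw [hedef, LinearEquiv.ofInjective_apply]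
    rfl
  -- define the candidate extension `T` of `A` inside `H`
  set M : Submodule ℂ H := B.domain.comap J.toLinearMap with hMdef
  have hmemM : ∀ x : M, J (x : H) ∈ B.domain := fun x => x.2
  have hmemR : ∀ z : H, J z ∈ R := fun z => ⟨z, rfl⟩
  let g : M →ₗ[ℂ] B.domain :=
    LinearMap.codRestrict B.domain (J.toLinearMap.comp M.subtype) fun x => x.2
  let Tlin : M →ₗ[ℂ] H :=
    e.symm.toLinearMap.comp ((P.toLinearMap).comp (B.toFun.comp g))
  set T : H →ₗ.[ℂ] H := ⟨M, Tlin⟩ with hTdef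
  have hTval : ∀ x : T.domain, J (T x) = (P (B ⟨J (x : H), x.2⟩) : K) := by
    intro x
    show J (Tlin x) = _
    simp only [Tlin, LinearMap.comp_apply, LinearEquiv.coe_coe]
    rw [hJe]
    rfl
  -- `T` extends `A`
  have hATdom : A.domain ≤ T.domain := fun x hx => hmem ⟨x, hx⟩
  have hATle : A ≤ T := by
    refine ⟨hATdom, fun x y hxy => ?_⟩
    apply J.injective
    rw [hTval y]
    have hBy : (⟨J (y : H), y.2⟩ : B.domain) = ⟨J (x : H), hmem x⟩ := by
      apply Subtype.ext
      simp [hxy]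
    rw [hBy, hext x (hmem x)]
    exact (Submodule.starProjection_eq_self_iff.2 (hmemR (A x))).symm
  -- `T` is densely defined
  have hTdense : Dense (T.domain : Set H) :=
    hA.1.mono (fun x hx => hATdom hx)
  -- `T` is symmetric
  have hTsymm : ∀ x y : T.domain, (inner ℂ (T x) ((y : H)) : ℂ) = inner ℂ ((x : H)) (T y) := by
    intro x y
    set vx : K := B ⟨J (x : H), x.2⟩ with hvx
    set vy : K := B ⟨J (y : H), y.2⟩ with hvy
    have h1 : (inner ℂ (T x) ((y : H)) : ℂ) = inner ℂ (J (T x)) (J (y : H)) :=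
      (J.inner_map_map _ _).symm
    have h2 : (inner ℂ ((P vx : K)) (J (y : H)) : ℂ) = inner ℂ vx (J (y : H)) := by
      have horth : (inner ℂ (vx - (P vx : K)) (J (y : H)) : ℂ) = 0 :=
        Submodule.inner_left_of_mem_orthogonal (hmemR (y : H))
          (Submodule.sub_starProjection_mem_orthogonal vx)
      rw [inner_sub_left, sub_eq_zero] at horth
      exact horth.symm
    have h3 : (inner ℂ vx (J (y : H)) : ℂ) = inner ℂ (J (x : H)) vy :=
      hBsymm ⟨J (x : H), x.2⟩ ⟨J (y : H), y.2⟩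
    have h4 : (inner ℂ (J (x : H)) vy : ℂ) = inner ℂ (J (x : H)) ((P vy : K)) := by
      have horth : (inner ℂ (J (x : H)) (vy - (P vy : K)) : ℂ) = 0 :=
        Submodule.inner_right_of_mem_orthogonal (hmemR (x : H))
          (Submodule.sub_starProjection_mem_orthogonal vy)
      rw [inner_sub_right, sub_eq_zero] at horth
      exact horth
    have h5 : (inner ℂ (J (x : H)) (J (T y)) : ℂ) = inner ℂ ((x : H)) (T y) :=
      J.inner_map_map _ _
    rw [h1, hTval x, h2, h3, h4, ← hTval y, h5]
  -- maximality: `T = A`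
  have hTA : T = A := hA.2.2.2 T hTdense hTsymm hATle
  have : T.domain = A.domain := by rw [hTA]
  rw [← this]
  ext x
  simp only [hTdef, hMdef, SetLike.mem_coe, Submodule.mem_comap, Set.mem_setOf_eq]
  rfl
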